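/- Let p ≥ 2. If a 2p-regular graph G on n vertices is (p+2)-star colourable, then n is divisible by (p+1)(p+2). -/

import Mathlib

open Finset

/-- A star colouring: a proper colouring with no bicoloured 4-vertex path. -/
def IsStarColoring {V : Type*} {α : Type*} (G : SimpleGraph V) (f : V → α) : Prop :=
  (∀ ⦃u v : V⦄, G.Adj u v → f u ≠ f v) ∧
  ∀ ⦃a b c d : V⦄, G.Adj a b → G.Adj b c → G.Adj c d →
    a ≠ c → a ≠ d → b ≠ d → ¬(f a = f c ∧ f b = f d)

private lemma colfun_card_le {p : ℕ} (hp : 2 ≤ p) (g : Fin (p+2) → ℕ) (a0 : Fin (p+2))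
    (hsum : ∑ c, g c = 2*p) (h0 : g a0 = 0) :
    (univ.filter fun c => g c = 1).card ≤ p := by
  classical
  set S := univ.filter fun c => g c = 1 with hSdef
  set T := univ.filter fun c => 2 ≤ g c with hTdef
  have hcarde : (univ.erase a0).card = p + 1 := by
    rw [Finset.card_erase_of_mem (mem_univ a0)]
    simp
  have h3 : g a0 + ∑ c ∈ univ.erase a0, g c = ∑ c, g c :=
    Finset.add_sum_erase _ _ (mem_univ a0)
  have hTne : T.Nonempty := by
    rw [hTdef, Finset.filter_nonempty_iff]
    by_contra h
    push_neg at h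
    have h2 : ∑ c ∈ univ.erase a0, g c ≤ (univ.erase a0).card * 1 :=
      Finset.sum_le_card_nsmul _ _ _ (fun c _ => by have := h c (mem_univ c); omega)
    omega
  have hdisj : Disjoint S T := by
    rw [Finset.disjoint_left]
    intro c hcS hcT
    rw [hSdef, mem_filter] at hcS
    rw [hTdef, mem_filter] at hcT
    omega
  have hsub : S ∪ T ⊆ univ.erase a0 := by
    intro c hc
    refine Finset.mem_erase.mpr ⟨?_, mem_univ c⟩
    rcases Finset.mem_union.mp hc with h | h <;>
      [rw [hSdef, mem_filter] at h; rw [hTdef, mem_filter] at h] <;>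
      (rintro rfl; omega)
  have hcle := Finset.card_le_card hsub
  rw [Finset.card_union_of_disjoint hdisj] at hcle
  have := hTne.card_pos
  omega

private lemma colfun_struct {p : ℕ} (hp : 2 ≤ p) (g : Fin (p+2) → ℕ) (a0 : Fin (p+2))
    (hsum : ∑ c, g c = 2*p) (h0 : g a0 = 0)
    (hS : (univ.filter fun c => g c = 1).card = p) :
    ∃ c0, c0 ≠ a0 ∧ g c0 = p ∧ ∀ c, c ≠ a0 → c ≠ c0 → g c = 1 := by
  classical
  set S := univ.filter fun c => g c = 1 with hSdef
  set T := univ.filter fun c => 2 ≤ g c with hTdef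
  have hcarde : (univ.erase a0).card = p + 1 := by
    rw [Finset.card_erase_of_mem (mem_univ a0)]
    simp
  have h3 : g a0 + ∑ c ∈ univ.erase a0, g c = ∑ c, g c :=
    Finset.add_sum_erase _ _ (mem_univ a0)
  have hTne : T.Nonempty := by
    rw [hTdef, Finset.filter_nonempty_iff]
    by_contra h
    push_neg at h
    have h2 : ∑ c ∈ univ.erase a0, g c ≤ (univ.erase a0).card * 1 :=
      Finset.sum_le_card_nsmul _ _ _ (fun c _ => by have := h c (mem_univ c); omega)
    omega
  have hdisj : Disjoint S T := by
    rw [Finset.disjoint_left]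
    intro c hcS hcT
    rw [hSdef, mem_filter] at hcS
    rw [hTdef, mem_filter] at hcT
    omega
  have hsub : S ∪ T ⊆ univ.erase a0 := by
    intro c hc
    refine Finset.mem_erase.mpr ⟨?_, mem_univ c⟩
    rcases Finset.mem_union.mp hc with h | h <;>
      [rw [hSdef, mem_filter] at h; rw [hTdef, mem_filter] at h] <;>
      (rintro rfl; omega)
  have hcle := Finset.card_le_card hsub
  rw [Finset.card_union_of_disjoint hdisj] at hcle
  have hT1 : T.card = 1 := by
    have := hTne.card_pos
    omega
  obtain ⟨c0, hc0⟩ := Finset.card_eq_one.mp hT1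
  have hc0T : c0 ∈ T := by rw [hc0]; exact mem_singleton_self c0
  have hc0g : 2 ≤ g c0 := by rw [hTdef, mem_filter] at hc0T; exact hc0T.2
  have hc0a0 : c0 ≠ a0 := by rintro rfl; omega
  have hSTeq : S ∪ T = univ.erase a0 := by
    apply Finset.eq_of_subset_of_card_le hsub
    rw [Finset.card_union_of_disjoint hdisj]
    omega
  have hsumS : ∑ c ∈ S, g c = p := by
    have heq : ∑ c ∈ S, g c = ∑ _c ∈ S, 1 :=
      Finset.sum_congr rfl (fun c hc => by rw [hSdef, mem_filter] at hc; exact hc.2)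
    rw [heq, Finset.sum_const, smul_eq_mul, mul_one, hS]
  have hgc0 : g c0 = p := by
    rw [← hSTeq, Finset.sum_union hdisj, hsumS, hc0, Finset.sum_singleton] at h3
    omega
  refine ⟨c0, hc0a0, hgc0, fun c hca0 hcc0 => ?_⟩
  have hcmem : c ∈ S ∪ T := by
    rw [hSTeq]
    exact Finset.mem_erase.mpr ⟨hca0, mem_univ c⟩
  rcases Finset.mem_union.mp hcmem with h | h
  · rw [hSdef, mem_filter] at h; exact h.2
  · rw [hc0] at h; exact absurd (Finset.mem_singleton.mp h) hcc0

private def dd {V : Type*} [Fintype V] [DecidableEq V] {k : ℕ} (G : SimpleGraph V)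
    [DecidableRel G.Adj] (f : V → Fin k) (v : V) (c : Fin k) : ℕ :=
  (univ.filter fun w => G.Adj v w ∧ f w = c).card

/-- If a 2p-regular graph (p ≥ 2) is (p+2)-star colourable then its number of
vertices is divisible by (p+1)(p+2). -/
theorem stmt8 {V : Type*} [Fintype V] (G : SimpleGraph V) (p : ℕ) (hp : 2 ≤ p)
    (hreg : ∀ v : V, (G.neighborSet v).ncard = 2 * p)
    (hcol : ∃ f : V → Fin (p + 2), IsStarColoring G f) :
    (p + 1) * (p + 2) ∣ Fintype.card V := by
  classical
  obtain ⟨f, hf1, hf2⟩ := hcol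
  haveI : DecidableRel G.Adj := Classical.decRel _
  -- degree as a finset card
  have hdeg : ∀ v : V, (univ.filter fun w => G.Adj v w).card = 2*p := by
    intro v
    have h := hreg v
    rw [Set.ncard_eq_toFinset_card'] at h
    rw [← h]
    congr 1
    ext w
    simp [Set.mem_toFinset]
  have hdsum : ∀ v : V, ∑ c, dd G f v c = 2*p := by
    intro v
    rw [← hdeg v]
    rw [Finset.card_eq_sum_card_fiberwise (f := f) (t := univ) (fun x _ => mem_univ (f x))]
    exact Finset.sum_congr rfl fun c _ => by rw [dd, Finset.filter_filter]
  have hd0 : ∀ v : V, dd G f v (f v) = 0 := by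
    intro v
    rw [dd, Finset.card_eq_zero, Finset.filter_eq_empty_iff]
    rintro w - ⟨hadj, heq⟩
    exact hf1 hadj heq.symm
  have hdpos : ∀ u v : V, G.Adj u v → 1 ≤ dd G f u (f v) := by
    intro u v huv
    rw [dd]
    exact Finset.card_pos.mpr ⟨v, by simp [huv]⟩
  have hF2 : ∀ u v : V, G.Adj u v → 2 ≤ dd G f v (f u) → dd G f u (f v) = 1 := by
    intro u v huv h2
    rw [dd] at h2
    obtain ⟨x, hx, hxu⟩ := Finset.exists_mem_ne
      (s := univ.filter fun w => G.Adj v w ∧ f w = f u) (by omega) u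
    rw [mem_filter] at hx
    obtain ⟨-, hvx, hfx⟩ := hx
    refine le_antisymm ?_ (hdpos u v huv)
    by_contra hge
    push_neg at hge
    rw [dd] at hge
    obtain ⟨y, hy, hyv⟩ := Finset.exists_mem_ne hge v
    rw [mem_filter] at hy
    obtain ⟨-, huy, hfy⟩ := hy
    have hyx : y ≠ x := by
      rintro rfl
      exact hf1 huy hfx.symm
    exact hf2 huy.symm huv hvx hyv hyx (Ne.symm hxu) ⟨hfy, hfx.symm⟩
  have hF3 : ∀ u v : V, G.Adj u v → dd G f u (f v) = 1 ∨ dd G f v (f u) = 1 := by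
    intro u v huv
    by_cases h : dd G f v (f u) = 1
    · exact Or.inr h
    · have h2 : 2 ≤ dd G f v (f u) := by
        have := hdpos v u huv.symm
        omega
      exact Or.inl (hF2 u v huv h2)
  -- number of colours with local degree exactly one
  set s : V → ℕ := fun u => (univ.filter fun c => dd G f u c = 1).card with hsdef
  have hsle : ∀ u, s u ≤ p := fun u => colfun_card_le hp _ (f u) (hdsum u) (hd0 u)
  set PP := ((univ ×ˢ univ : Finset (V × V)).filter fun z => G.Adj z.1 z.2) with hPPdef
  set L := (PP.filter fun z => dd G f z.1 (f z.2) = 1) with hLdef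
  set L' := (PP.filter fun z => dd G f z.2 (f z.1) = 1) with hL'def
  have hPPcard : PP.card = 2 * (Fintype.card V * p) := by
    rw [hPPdef, Finset.card_filter, Finset.sum_product]
    have h1 : ∀ u : V, ∑ w : V, (if G.Adj u w then 1 else 0) = 2*p := fun u => by
      rw [← Finset.card_filter]; exact hdeg u
    have h2 : ∑ u : V, ∑ w : V, (if G.Adj u w then 1 else 0) = ∑ _u : V, 2*p :=
      Finset.sum_congr rfl (fun u _ => h1 u)
    rw [h2, Finset.sum_const, smul_eq_mul, card_univ]
    ring
  have hLu : ∀ u : V, (univ.filter fun w => G.Adj u w ∧ dd G f u (f w) = 1).card = s u := by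
    intro u
    rw [Finset.card_eq_sum_card_fiberwise (f := f)
      (t := univ.filter fun c => dd G f u c = 1) (fun w hw => by
        rw [mem_coe, mem_filter] at hw ⊢; exact ⟨mem_univ _, hw.2.2⟩)]
    have h1 : ∀ c ∈ (univ.filter fun c => dd G f u c = 1),
        ((univ.filter fun w => G.Adj u w ∧ dd G f u (f w) = 1).filter fun w => f w = c).card
          = 1 := by
      intro c hc
      rw [mem_filter] at hc
      have heq : ((univ.filter fun w => G.Adj u w ∧ dd G f u (f w) = 1).filter fun w => f w = c)
          = univ.filter fun w => G.Adj u w ∧ f w = c := by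
        ext w
        simp only [mem_filter, mem_univ, true_and]
        constructor
        · rintro ⟨⟨ha, hb⟩, hc'⟩; exact ⟨ha, hc'⟩
        · rintro ⟨ha, hb⟩; exact ⟨⟨ha, by rw [hb]; exact hc.2⟩, hb⟩
      rw [heq]
      exact hc.2
    have h2 : ∑ c ∈ (univ.filter fun c => dd G f u c = 1),
        ((univ.filter fun w => G.Adj u w ∧ dd G f u (f w) = 1).filter fun w => f w = c).card
        = ∑ _c ∈ (univ.filter fun c => dd G f u c = 1), 1 := Finset.sum_congr rfl h1
    rw [h2, Finset.sum_const, smul_eq_mul, mul_one]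
  have hLcard : L.card = ∑ u : V, s u := by
    rw [hLdef, hPPdef, Finset.filter_filter, Finset.card_filter, Finset.sum_product]
    refine Finset.sum_congr rfl fun u _ => ?_
    rw [← hLu u, Finset.card_filter]
  have hL'card : L'.card = L.card := by
    rw [hL'def, hLdef]
    apply Finset.card_bij' (fun z _ => Prod.swap z) (fun z _ => Prod.swap z)
    · intro z hz
      simp only [hPPdef, mem_filter, mem_product, mem_univ, true_and, Prod.fst_swap,
        Prod.snd_swap] at hz ⊢
      exact ⟨hz.1.symm, hz.2⟩
    · intro z hz
      simp only [hPPdef, mem_filter, mem_product, mem_univ, true_and, Prod.fst_swap,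
        Prod.snd_swap] at hz ⊢
      exact ⟨hz.1.symm, hz.2⟩
    · intro z _; exact Prod.swap_swap z
    · intro z _; exact Prod.swap_swap z
  have hPPsub : PP ⊆ L ∪ L' := by
    intro z hz
    have hadj : G.Adj z.1 z.2 := by
      rw [hPPdef, mem_filter] at hz; exact hz.2
    rcases hF3 z.1 z.2 hadj with h | h
    · exact Finset.mem_union.mpr (Or.inl (Finset.mem_filter.mpr ⟨hz, h⟩))
    · exact Finset.mem_union.mpr (Or.inr (Finset.mem_filter.mpr ⟨hz, h⟩))
  have hLLsub : L ∪ L' ⊆ PP :=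
    Finset.union_subset (Finset.filter_subset _ _) (Finset.filter_subset _ _)
  have hsums : ∑ u : V, s u ≤ Fintype.card V * p := by
    calc ∑ u : V, s u ≤ ∑ _u : V, p := Finset.sum_le_sum (fun u _ => hsle u)
    _ = Fintype.card V * p := by rw [Finset.sum_const, smul_eq_mul, card_univ]
  have hui := Finset.card_union_add_card_inter L L'
  have hc1 := Finset.card_le_card hPPsub
  have hc2 := Finset.card_le_card hLLsub
  have hstot : ∑ u : V, s u = Fintype.card V * p := by omega
  have hinter : (L ∩ L').card = 0 := by omega
  have hsp : ∀ u : V, s u = p := by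
    intro u
    by_contra hne
    have hlt : ∑ v : V, s v < ∑ _v : V, p :=
      Finset.sum_lt_sum (fun i _ => hsle i) ⟨u, mem_univ u, lt_of_le_of_ne (hsle u) hne⟩
    rw [Finset.sum_const, smul_eq_mul, card_univ] at hlt
    omega
  have hnotboth : ∀ u w : V, G.Adj u w → dd G f u (f w) = 1 → dd G f w (f u) = 1 → False := by
    intro u w hadj h1 h2
    rw [Finset.card_eq_zero] at hinter
    have hmem : (u, w) ∈ L ∩ L' := by
      have hpp : (u, w) ∈ PP := by
        rw [hPPdef, mem_filter]
        exact ⟨Finset.mem_product.mpr ⟨mem_univ u, mem_univ w⟩, hadj⟩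
      exact Finset.mem_inter.mpr
        ⟨Finset.mem_filter.mpr ⟨hpp, h1⟩, Finset.mem_filter.mpr ⟨hpp, h2⟩⟩
    rw [hinter] at hmem
    exact absurd hmem (Finset.notMem_empty _)
  -- per-vertex structure: unique "centre colour" q u with p neighbours, others exactly 1
  have hstruct : ∀ u : V, ∃ c0, c0 ≠ f u ∧ dd G f u c0 = p ∧
      ∀ c, c ≠ f u → c ≠ c0 → dd G f u c = 1 :=
    fun u => colfun_struct hp _ (f u) (hdsum u) (hd0 u) (hsp u)
  choose q hq0 hq1 hq2 using hstruct
  have hd1iff : ∀ u c, c ≠ f u → (dd G f u c = 1 ↔ ¬ (q u = c)) := by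
    intro u c hc
    constructor
    · intro h1 hqc
      rw [← hqc, hq1 u] at h1
      omega
    · intro hne
      exact hq2 u c hc (fun h => hne h.symm)
  set na : Fin (p+2) → ℕ := fun a => (univ.filter fun u => f u = a).card with hnadef
  set A : Fin (p+2) → Fin (p+2) → ℕ :=
    fun a b => (univ.filter fun u => f u = a ∧ q u = b).card with hAdef
  set Bd : Fin (p+2) → Fin (p+2) → ℕ :=
    fun a b => (univ.filter fun u => f u = a ∧ dd G f u b = 1).card with hBdef
  have hnatot : ∑ a, na a = Fintype.card V := by
    simp only [hnadef]
    rw [← card_univ]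
    exact (Finset.card_eq_sum_card_fiberwise (f := f) (t := univ)
      (fun x _ => mem_univ (f x))).symm
  have hApart : ∀ a, ∑ b ∈ univ.erase a, A a b = na a := by
    intro a
    have h1 : (univ.filter fun u => f u = a).card
        = ∑ b ∈ univ.erase a, ((univ.filter fun u => f u = a).filter fun u => q u = b).card :=
      Finset.card_eq_sum_card_fiberwise (fun u hu => by
        rw [mem_coe, mem_filter] at hu
        exact Finset.mem_erase.mpr ⟨by rw [← hu.2]; exact hq0 u, mem_univ _⟩)
    have h2 : ∀ b ∈ univ.erase a,
        ((univ.filter fun u => f u = a).filter fun u => q u = b).card = A a b := by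
      intro b _
      rw [Finset.filter_filter]
    simp only [hnadef]
    rw [h1]
    exact (Finset.sum_congr rfl h2).symm
  have hfilt : ∀ a b : Fin (p+2), b ≠ a →
      (univ.filter fun u => f u = a ∧ ¬ q u = b)
        = (univ.filter fun u => f u = a ∧ dd G f u b = 1) := by
    intro a b hba
    ext u
    simp only [mem_filter, mem_univ, true_and]
    constructor
    · rintro ⟨hfu, hqu⟩
      exact ⟨hfu, (hd1iff u b (by rw [hfu]; exact hba)).mpr hqu⟩
    · rintro ⟨hfu, hdu⟩
      exact ⟨hfu, (hd1iff u b (by rw [hfu]; exact hba)).mp hdu⟩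
  have hABna : ∀ a b : Fin (p+2), b ≠ a → A a b + Bd a b = na a := by
    intro a b hba
    have h1 := Finset.card_filter_add_card_filter_not
      (s := univ.filter fun u => f u = a) (p := fun u => q u = b)
    rw [Finset.filter_filter, Finset.filter_filter, hfilt a b hba] at h1
    simp only [hAdef, hBdef, hnadef]
    exact h1
  have hIe : ∀ a b : Fin (p+2), b ≠ a →
      ∑ u ∈ univ.filter (fun u => f u = a), dd G f u b = p * A a b + Bd a b := by
    intro a b hba
    rw [← Finset.sum_filter_add_sum_filter_not (univ.filter fun u => f u = a)
      (fun u => q u = b) (fun u => dd G f u b)]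
    have h1 : ∑ u ∈ (univ.filter fun u => f u = a).filter (fun u => q u = b), dd G f u b
        = ∑ _u ∈ (univ.filter fun u => f u = a).filter (fun u => q u = b), p := by
      refine Finset.sum_congr rfl fun u hu => ?_
      rw [Finset.mem_filter] at hu
      rw [← hu.2]; exact hq1 u
    have h2 : ∑ u ∈ (univ.filter fun u => f u = a).filter (fun u => ¬ q u = b), dd G f u b
        = ∑ _u ∈ (univ.filter fun u => f u = a).filter (fun u => ¬ q u = b), 1 := by
      refine Finset.sum_congr rfl fun u hu => ?_
      rw [Finset.mem_filter, Finset.mem_filter] at hu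
      exact hq2 u b (by rw [hu.1.2]; exact hba) (fun h => hu.2 h.symm)
    rw [h1, h2, Finset.sum_const, Finset.sum_const, smul_eq_mul, smul_eq_mul, mul_one,
      Finset.filter_filter, Finset.filter_filter, hfilt a b hba]
    simp only [hAdef, hBdef]
    ring
  have hIII : ∀ a b : Fin (p+2),
      ∑ u ∈ univ.filter (fun u => f u = a), dd G f u b = Bd a b + Bd b a := by
    intro a b
    have key : ∀ u w : V, f u = a →
        (if G.Adj u w ∧ f w = b then (1:ℕ) else 0)
          = (if G.Adj u w ∧ f w = b ∧ dd G f u b = 1 then (1:ℕ) else 0)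
            + (if G.Adj u w ∧ f w = b ∧ dd G f w a = 1 then (1:ℕ) else 0) := by
      intro u w hu
      by_cases hadj : G.Adj u w
      · by_cases hw : f w = b
        · have hone : dd G f u b = 1 ∨ dd G f w a = 1 := by
            have h := hF3 u w hadj
            rw [hu, hw] at h
            exact h
          have hnb : ¬(dd G f u b = 1 ∧ dd G f w a = 1) := by
            rintro ⟨x1, x2⟩
            rw [← hw] at x1
            rw [← hu] at x2
            exact hnotboth u w hadj x1 x2
          by_cases hd : dd G f u b = 1
          · have hd2 : ¬ dd G f w a = 1 := fun h => hnb ⟨hd, h⟩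
            simp [hadj, hw, hd, hd2]
          · have hd2 : dd G f w a = 1 := by tauto
            simp [hadj, hw, hd, hd2]
        · simp [hw]
      · simp [hadj]
    have step1 : ∑ u ∈ univ.filter (fun u => f u = a), dd G f u b
        = (∑ u ∈ univ.filter (fun u => f u = a), ∑ w : V,
            (if G.Adj u w ∧ f w = b ∧ dd G f u b = 1 then (1:ℕ) else 0))
          + (∑ u ∈ univ.filter (fun u => f u = a), ∑ w : V,
            (if G.Adj u w ∧ f w = b ∧ dd G f w a = 1 then (1:ℕ) else 0)) := by
      rw [← Finset.sum_add_distrib]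
      refine Finset.sum_congr rfl fun u hu => ?_
      rw [Finset.mem_filter] at hu
      rw [← Finset.sum_add_distrib]
      rw [← Finset.sum_congr rfl fun w (_ : w ∈ (univ : Finset V)) => key u w hu.2]
      exact Finset.card_filter _ _
    have step2 : ∑ u ∈ univ.filter (fun u => f u = a), ∑ w : V,
        (if G.Adj u w ∧ f w = b ∧ dd G f u b = 1 then (1:ℕ) else 0) = Bd a b := by
      have h1 : ∀ u : V, f u = a → (∑ w : V,
          (if G.Adj u w ∧ f w = b ∧ dd G f u b = 1 then (1:ℕ) else 0))
            = (if dd G f u b = 1 then (1:ℕ) else 0) := by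
        intro u hu
        by_cases hd : dd G f u b = 1
        · rw [if_pos hd]
          have hpt : ∀ w : V, (if G.Adj u w ∧ f w = b ∧ dd G f u b = 1 then (1:ℕ) else 0)
              = (if G.Adj u w ∧ f w = b then (1:ℕ) else 0) := by
            intro w
            by_cases h : G.Adj u w ∧ f w = b
            · rw [if_pos ⟨h.1, h.2, hd⟩, if_pos h]
            · rw [if_neg (fun hc => h ⟨hc.1, hc.2.1⟩), if_neg h]
          rw [Finset.sum_congr rfl fun w _ => hpt w, ← Finset.card_filter]
          exact hd
        · rw [if_neg hd]
          apply Finset.sum_eq_zero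
          intro w _
          exact if_neg (fun hc => hd hc.2.2)
      calc ∑ u ∈ univ.filter (fun u => f u = a), ∑ w : V,
            (if G.Adj u w ∧ f w = b ∧ dd G f u b = 1 then (1:ℕ) else 0)
          = ∑ u ∈ univ.filter (fun u => f u = a), (if dd G f u b = 1 then (1:ℕ) else 0) :=
            Finset.sum_congr rfl fun u hu => h1 u (Finset.mem_filter.mp hu).2
        _ = Bd a b := by
            rw [← Finset.card_filter, Finset.filter_filter]
    have step3 : ∑ u ∈ univ.filter (fun u => f u = a), ∑ w : V,
        (if G.Adj u w ∧ f w = b ∧ dd G f w a = 1 then (1:ℕ) else 0) = Bd b a := by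
      rw [Finset.sum_filter]
      have h1 : ∀ u : V, (if f u = a then (∑ w : V,
          (if G.Adj u w ∧ f w = b ∧ dd G f w a = 1 then (1:ℕ) else 0)) else 0)
            = ∑ w : V, (if G.Adj u w ∧ f u = a ∧ f w = b ∧ dd G f w a = 1 then (1:ℕ) else 0) := by
        intro u
        by_cases h : f u = a
        · rw [if_pos h]
          refine Finset.sum_congr rfl fun w _ => ?_
          by_cases h2 : G.Adj u w ∧ f w = b ∧ dd G f w a = 1
          · rw [if_pos h2, if_pos ⟨h2.1, h, h2.2⟩]
          · rw [if_neg h2, if_neg (fun hc => h2 ⟨hc.1, hc.2.2⟩)]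
        · rw [if_neg h]
          exact (Finset.sum_eq_zero fun w _ => if_neg (fun hc => h hc.2.1)).symm
      rw [Finset.sum_congr rfl fun u _ => h1 u, Finset.sum_comm]
      have h2 : ∀ w : V,
          (∑ u : V, (if G.Adj u w ∧ f u = a ∧ f w = b ∧ dd G f w a = 1 then (1:ℕ) else 0))
            = (if f w = b ∧ dd G f w a = 1 then dd G f w a else 0) := by
        intro w
        by_cases hw : f w = b ∧ dd G f w a = 1
        · rw [if_pos hw]
          have h3 : ∀ u : V,
              (if G.Adj u w ∧ f u = a ∧ f w = b ∧ dd G f w a = 1 then (1:ℕ) else 0)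
                = (if G.Adj w u ∧ f u = a then (1:ℕ) else 0) := by
            intro u
            by_cases h4 : G.Adj w u ∧ f u = a
            · rw [if_pos ⟨h4.1.symm, h4.2, hw.1, hw.2⟩, if_pos h4]
            · rw [if_neg (fun hc => h4 ⟨hc.1.symm, hc.2.1⟩), if_neg h4]
          rw [Finset.sum_congr rfl fun u _ => h3 u, ← Finset.card_filter]
          rfl
        · rw [if_neg hw]
          apply Finset.sum_eq_zero
          intro u _
          exact if_neg (fun hc => hw ⟨hc.2.2.1, hc.2.2.2⟩)
      rw [Finset.sum_congr rfl fun w _ => h2 w]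
      have h5 : ∀ w : V, (if f w = b ∧ dd G f w a = 1 then dd G f w a else 0)
          = (if f w = b ∧ dd G f w a = 1 then (1:ℕ) else 0) := by
        intro w
        by_cases h : f w = b ∧ dd G f w a = 1
        · rw [if_pos h, if_pos h, h.2]
        · rw [if_neg h, if_neg h]
      rw [Finset.sum_congr rfl fun w _ => h5 w, ← Finset.card_filter]
    rw [step1, step2, step3]
  have hIV : ∀ a b : Fin (p+2), b ≠ a → p * A a b + A b a = na b := by
    intro a b hba
    have h1 := hIe a b hba
    have h2 := hIII a b
    have h3 := hABna b a (Ne.symm hba)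
    linarith
  have hR : ∀ a b : Fin (p+2), b ≠ a →
      p^2 * A a b + na a = p * na b + A a b := by
    intro a b hba
    have h1 := hIV a b hba
    have h2 := hIV b a (Ne.symm hba)
    rw [← h1, ← h2]
    ring
  have hkeyn : ∀ a : Fin (p+2), (p+2) * na a = Fintype.card V := by
    intro a
    have hy : na a + ∑ b ∈ univ.erase a, na b = Fintype.card V := by
      rw [Finset.add_sum_erase _ _ (mem_univ a), hnatot]
    have hRs : ∑ b ∈ univ.erase a, (p^2 * A a b + na a)
        = ∑ b ∈ univ.erase a, (p * na b + A a b) :=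
      Finset.sum_congr rfl fun b hb => hR a b (Finset.mem_erase.mp hb).1
    rw [Finset.sum_add_distrib, Finset.sum_add_distrib, ← Finset.mul_sum, ← Finset.mul_sum,
      hApart a, Finset.sum_const, smul_eq_mul,
      Finset.card_erase_of_mem (mem_univ a), Finset.card_univ, Fintype.card_fin] at hRs
    have hcc : p + 2 - 1 = p + 1 := rfl
    rw [hcc] at hRs
    have hp0 : (p:ℤ) ≠ 0 := by
      have hpn : p ≠ 0 := by omega
      exact_mod_cast hpn
    have hz : (p:ℤ) * ((p+2) * (na a)) = (p:ℤ) * (Fintype.card V) := by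
      have hRs' : (p:ℤ)^2 * (na a) + (p+1) * (na a)
          = p * (∑ b ∈ univ.erase a, (na b : ℤ)) + na a := by exact_mod_cast hRs
      have hy' : (na a : ℤ) + ∑ b ∈ univ.erase a, (na b : ℤ) = (Fintype.card V : ℤ) := by
        exact_mod_cast hy
      linear_combination hRs' + (p:ℤ) * hy'
    have hfinal := mul_left_cancel₀ hp0 hz
    exact_mod_cast hfinal
  have h01 : (0 : Fin (p+2)) ≠ 1 := Fin.zero_ne_one
  have hnaeq : na 1 = na 0 := by
    have h0 := hkeyn 0
    have h1 := hkeyn 1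
    have h2 : (p+2) * na 1 = (p+2) * na 0 := by rw [h0, h1]
    exact Nat.eq_of_mul_eq_mul_left (by omega) h2
  have hfin : (p+1) * A 0 1 = na 0 := by
    have hR01 := hR 0 1 (Ne.symm h01)
    rw [hnaeq] at hR01
    have hR01' : (p:ℤ)^2 * (A 0 1) + (na 0) = p * (na 0) + A 0 1 := by exact_mod_cast hR01
    have hz : ((p:ℤ) - 1) * ((p+1) * (A 0 1) - na 0) = 0 := by linear_combination hR01'
    rcases mul_eq_zero.mp hz with h | h
    · exfalso
      have hp1 : (p:ℤ) = 1 := by linarith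
      have hp1' : p = 1 := by exact_mod_cast hp1
      omega
    · have hz2 : ((p:ℤ)+1) * (A 0 1) = na 0 := by linarith
      exact_mod_cast hz2
  refine ⟨A 0 1, ?_⟩
  rw [← hkeyn 0, ← hfin]
  ring
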